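/- The Brauer operator ρ(η, β) = (1−η−β) I/d² + η V/d + β V^{T_A}/d on C^d ⊗ C^d is positive semidefinite if and only if the three inequalities hold: 1 ≥ (d+1)η + β, 1 ≥ −(d−1)η − (d²−1)β, and 1 ≥ −(d−1)η + β. -/

import Mathlib

open Matrix Kronecker BigOperators
open scoped ComplexOrder

/-- The swap operator `V = ∑ i j, |ij⟩⟨ji|` on `C^d ⊗ C^d`. -/
noncomputable def swapOp (d : ℕ) : Matrix (Fin d × Fin d) (Fin d × Fin d) ℂ :=
  fun p q => if p.1 = q.2 ∧ p.2 = q.1 then 1 else 0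

/-- Partial transpose on the first tensor factor. -/
noncomputable def ptransposeA {d : ℕ} (ρ : Matrix (Fin d × Fin d) (Fin d × Fin d) ℂ) :
    Matrix (Fin d × Fin d) (Fin d × Fin d) ℂ :=
  fun p q => ρ (q.1, p.2) (p.1, q.2)

/-- The Brauer operator `ρ(η,β) = (1−η−β) I/d² + η V/d + β V^{T_A}/d`. -/
noncomputable def brauer (d : ℕ) (η β : ℝ) : Matrix (Fin d × Fin d) (Fin d × Fin d) ℂ :=
  ((1 - η - β) / (d : ℝ)^2) • (1 : Matrix (Fin d × Fin d) (Fin d × Fin d) ℂ)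
    + (η / (d : ℝ)) • swapOp d + (β / (d : ℝ)) • ptransposeA (swapOp d)

noncomputable def Qop (d : ℕ) : Matrix (Fin d × Fin d) (Fin d × Fin d) ℂ :=
  fun p q => if p.1 = p.2 ∧ q.1 = q.2 then 1 else 0

lemma ptA_swap (d : ℕ) : ptransposeA (swapOp d) = Qop d := by
  ext p q
  simp only [ptransposeA, swapOp, Qop]
  refine if_congr ?_ rfl rfl
  constructor
  · rintro ⟨a, b⟩; exact ⟨b.symm, a⟩
  · rintro ⟨a, b⟩; exact ⟨b, a.symm⟩

-- the three projections
noncomputable def projA (d : ℕ) : Matrix (Fin d × Fin d) (Fin d × Fin d) ℂ :=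
  (2⁻¹ : ℂ) • (1 - swapOp d)
noncomputable def projB (d : ℕ) : Matrix (Fin d × Fin d) (Fin d × Fin d) ℂ :=
  ((d : ℂ)⁻¹) • Qop d
noncomputable def projC (d : ℕ) : Matrix (Fin d × Fin d) (Fin d × Fin d) ℂ :=
  (2⁻¹ : ℂ) • (1 + swapOp d) - ((d : ℂ)⁻¹) • Qop d

set_option maxHeartbeats 1000000 in
lemma brauer_decomp (d : ℕ) (hd : 2 ≤ d) (η β : ℝ) :
    brauer d η β =
      ((1 - ((d:ℝ)+1)*η - β) / (d:ℝ)^2) • projA d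
      + ((1 + ((d:ℝ)-1)*η + ((d:ℝ)^2-1)*β) / (d:ℝ)^2) • projB d
      + ((1 + ((d:ℝ)-1)*η - β) / (d:ℝ)^2) • projC d := by
  have hD : ((d:ℂ)) ≠ 0 := Nat.cast_ne_zero.mpr (by omega)
  have hDR : ((d:ℝ)) ≠ 0 := Nat.cast_ne_zero.mpr (by omega)
  simp only [brauer, projA, projB, projC, ptA_swap]
  match_scalars
  · push_cast
    field_simp
    ring
  · push_cast
    field_simp
    ring
  · push_cast
    field_simp
    ring

lemma swap_mul_swap (d : ℕ) : swapOp d * swapOp d = 1 := by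
  ext p q
  simp only [mul_apply, swapOp, one_apply, Fintype.sum_prod_type]
  simp [ite_and, Finset.sum_ite_eq, Finset.sum_ite_eq', Prod.ext_iff, eq_comm]

lemma Q_mul_Q (d : ℕ) : Qop d * Qop d = (d : ℂ) • Qop d := by
  ext p q
  simp only [mul_apply, Qop, Matrix.smul_apply, smul_eq_mul, Fintype.sum_prod_type]
  by_cases h1 : p.1 = p.2 <;> by_cases h2 : q.1 = q.2 <;>
    simp [h1, h2, ite_and, Finset.sum_ite_eq, Finset.sum_ite_eq', Finset.card_univ, mul_comm]

lemma swap_mul_Q (d : ℕ) : swapOp d * Qop d = Qop d := by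
  ext p q
  simp only [mul_apply, swapOp, Qop, Fintype.sum_prod_type]
  by_cases h1 : p.1 = p.2 <;> by_cases h2 : q.1 = q.2 <;>
    simp [h1, h2, ite_and, Finset.sum_ite_eq, Finset.sum_ite_eq', eq_comm]

lemma Q_mul_swap (d : ℕ) : Qop d * swapOp d = Qop d := by
  ext p q
  simp only [mul_apply, swapOp, Qop, Fintype.sum_prod_type]
  by_cases h1 : p.1 = p.2 <;> by_cases h2 : q.1 = q.2 <;>
    simp [h1, h2, ite_and, Finset.sum_ite_eq, Finset.sum_ite_eq', eq_comm]

lemma swap_herm (d : ℕ) : (swapOp d).IsHermitian := by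
  ext p q
  simp only [swapOp, conjTranspose_apply, apply_ite star, star_one, star_zero]
  refine if_congr ?_ rfl rfl
  constructor <;> rintro ⟨a, b⟩ <;> exact ⟨b.symm, a.symm⟩

lemma Q_herm (d : ℕ) : (Qop d).IsHermitian := by
  ext p q
  simp only [Qop, conjTranspose_apply, apply_ite star, star_one, star_zero]
  refine if_congr ?_ rfl rfl
  exact and_comm

lemma psd_of_proj {n : Type*} [Fintype n] (P : Matrix n n ℂ)
    (h1 : P.IsHermitian) (h2 : P * P = P) : P.PosSemidef := by
  have : P = Pᴴ * P := by rw [h1.eq, h2]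
  rw [this]
  exact posSemidef_conjTranspose_mul_self P

lemma psd_smul {n : Type*} [Fintype n] {M : Matrix n n ℂ} (hM : M.PosSemidef) {c : ℝ}
    (hc : 0 ≤ c) : (c • M).PosSemidef := by
  refine .of_dotProduct_mulVec_nonneg ?_ ?_
  · unfold Matrix.IsHermitian
    rw [conjTranspose_smul, hM.1.eq, star_trivial]
  · intro x
    rw [smul_mulVec, dotProduct_smul]
    have := hM.dotProduct_mulVec_nonneg x
    rw [Complex.real_smul]
    exact mul_nonneg (by exact_mod_cast hc) this

lemma projA_psd (d : ℕ) : (projA d).PosSemidef := by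
  refine psd_of_proj _ ?_ ?_
  · unfold Matrix.IsHermitian projA
    rw [conjTranspose_smul, conjTranspose_sub, conjTranspose_one, (swap_herm d).eq]
    norm_num
  · unfold projA
    simp only [smul_mul_smul_comm, sub_mul, mul_sub, one_mul, mul_one, swap_mul_swap]
    match_scalars <;> norm_num

lemma projB_psd (d : ℕ) (hd : 2 ≤ d) : (projB d).PosSemidef := by
  have hD : ((d:ℂ)) ≠ 0 := Nat.cast_ne_zero.mpr (by omega)
  refine psd_of_proj _ ?_ ?_
  · unfold Matrix.IsHermitian projB
    rw [conjTranspose_smul, (Q_herm d).eq]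
    congr 1
    simp [Complex.ext_iff]
  · unfold projB
    rw [smul_mul_smul_comm, Q_mul_Q, smul_smul]
    match_scalars
    field_simp

lemma projC_psd (d : ℕ) (hd : 2 ≤ d) : (projC d).PosSemidef := by
  have hD : ((d:ℂ)) ≠ 0 := Nat.cast_ne_zero.mpr (by omega)
  refine psd_of_proj _ ?_ ?_
  · unfold Matrix.IsHermitian projC
    rw [conjTranspose_sub, conjTranspose_smul, conjTranspose_smul, conjTranspose_add,
      conjTranspose_one, (swap_herm d).eq, (Q_herm d).eq]
    congr 1 <;> [skip; congr 1] <;> simp [Complex.ext_iff]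
  · unfold projC
    simp only [sub_mul, mul_sub, smul_mul_smul_comm, add_mul, mul_add, one_mul, mul_one,
      swap_mul_swap, Q_mul_Q, swap_mul_Q, Q_mul_swap]
    match_scalars <;> field_simp <;> ring

lemma quad_two {n : Type*} [Fintype n] [DecidableEq n] (M : Matrix n n ℂ) (p₁ p₂ : n) :
    star (Pi.single p₁ (1:ℂ) - Pi.single p₂ 1) ⬝ᵥ M *ᵥ (Pi.single p₁ 1 - Pi.single p₂ 1)
      = M p₁ p₁ - M p₁ p₂ - M p₂ p₁ + M p₂ p₂ := by
  have hs : star (Pi.single p₁ (1:ℂ) - Pi.single p₂ 1)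
      = (Pi.single p₁ (1:ℂ) - Pi.single p₂ 1 : n → ℂ) := by
    funext i
    simp [Pi.single_apply, apply_ite star]
  rw [hs]
  simp [mulVec_sub, mulVec_single, dotProduct_sub, sub_dotProduct, single_dotProduct]
  ring

lemma brauer_app (d : ℕ) (η β : ℝ) (p q : Fin d × Fin d) :
    brauer d η β p q =
      (if p = q then (((1 - η - β) / (d:ℝ)^2 : ℝ) : ℂ) else 0)
      + (if p.1 = q.2 ∧ p.2 = q.1 then ((η / (d:ℝ) : ℝ) : ℂ) else 0)
      + (if p.1 = p.2 ∧ q.1 = q.2 then ((β / (d:ℝ) : ℝ) : ℂ) else 0) := by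
  simp only [brauer, ptA_swap, Matrix.add_apply, Matrix.smul_apply, one_apply, swapOp, Qop,
    Complex.real_smul, mul_ite, mul_one, mul_zero]

lemma quad_diag (d : ℕ) (η β : ℝ) :
    star (fun p : Fin d × Fin d => if p.1 = p.2 then (1:ℂ) else 0) ⬝ᵥ
        (brauer d η β) *ᵥ (fun p => if p.1 = p.2 then (1:ℂ) else 0)
      = (((d:ℝ) * ((1 - η - β) / (d:ℝ)^2 + η / (d:ℝ)) + (d:ℝ)^2 * (β / (d:ℝ)) : ℝ) : ℂ) := by
  have hs : star (fun p : Fin d × Fin d => if p.1 = p.2 then (1:ℂ) else 0)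
      = (fun p : Fin d × Fin d => if p.1 = p.2 then (1:ℂ) else 0) := by
    funext p; simp [apply_ite star]
  rw [hs]
  simp only [dotProduct, mulVec, Fintype.sum_prod_type, ite_mul, mul_ite, one_mul, mul_one,
    zero_mul, mul_zero, Finset.sum_ite_eq, Finset.sum_ite_eq', Finset.mem_univ, if_true]
  have : ∀ i j : Fin d, brauer d η β (i, i) (j, j)
      = (if i = j then (((1 - η - β) / (d:ℝ)^2 + η / (d:ℝ) : ℝ) : ℂ) else 0)
        + ((β / (d:ℝ) : ℝ) : ℂ) := by
    intro i j
    rw [brauer_app]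
    by_cases h : i = j <;> simp [h, Prod.ext_iff] <;> push_cast <;> ring
  calc ∑ i : Fin d, ∑ j : Fin d, brauer d η β (i, i) (j, j)
      = ∑ i : Fin d, ∑ j : Fin d,
          ((if i = j then (((1 - η - β) / (d:ℝ)^2 + η / (d:ℝ) : ℝ) : ℂ) else 0)
            + ((β / (d:ℝ) : ℝ) : ℂ)) := by
        refine Finset.sum_congr rfl fun i _ => Finset.sum_congr rfl fun j _ => this i j
    _ = _ := by
        simp [Finset.sum_add_distrib, Finset.sum_ite_eq, Finset.card_univ]
        push_cast
        ring

theorem stmt6 (d : ℕ) (hd : 2 ≤ d) (η β : ℝ) :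
    (brauer d η β).PosSemidef ↔
      ((d : ℝ) + 1) * η + β ≤ 1 ∧
      -((d : ℝ) - 1) * η - ((d : ℝ)^2 - 1) * β ≤ 1 ∧
      -((d : ℝ) - 1) * η + β ≤ 1 := by
  have hDR : (0:ℝ) < (d:ℝ) := by exact_mod_cast (by omega : 0 < d)
  have hDne : ((d:ℝ)) ≠ 0 := ne_of_gt hDR
  constructor
  · intro hpsd
    obtain ⟨i0, i1, hne⟩ : ∃ i0 i1 : Fin d, i0 ≠ i1 :=
      ⟨⟨0, by omega⟩, ⟨1, by omega⟩, by simp [Fin.ext_iff]⟩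
    -- first inequality
    have k1 := hpsd.dotProduct_mulVec_nonneg (Pi.single ((i0, i1)) (1:ℂ) - Pi.single ((i1, i0)) 1)
    rw [quad_two] at k1
    have e1 : brauer d η β (i0,i1) (i0,i1) - brauer d η β (i0,i1) (i1,i0)
        - brauer d η β (i1,i0) (i0,i1) + brauer d η β (i1,i0) (i1,i0)
        = ((2*((1-η-β)/(d:ℝ)^2) - 2*(η/(d:ℝ)) : ℝ) : ℂ) := by
      rw [brauer_app, brauer_app, brauer_app, brauer_app]
      simp [Prod.ext_iff, hne, hne.symm]
      push_cast
      ring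
    rw [e1, Complex.zero_le_real] at k1
    -- third inequality
    have k3 := hpsd.dotProduct_mulVec_nonneg (Pi.single ((i0, i0)) (1:ℂ) - Pi.single ((i1, i1)) 1)
    rw [quad_two] at k3
    have e3 : brauer d η β (i0,i0) (i0,i0) - brauer d η β (i0,i0) (i1,i1)
        - brauer d η β (i1,i1) (i0,i0) + brauer d η β (i1,i1) (i1,i1)
        = ((2*((1-η-β)/(d:ℝ)^2) + 2*(η/(d:ℝ)) : ℝ) : ℂ) := by
      rw [brauer_app, brauer_app, brauer_app, brauer_app]
      simp [Prod.ext_iff, hne, hne.symm]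
      push_cast
      ring
    rw [e3, Complex.zero_le_real] at k3
    -- second inequality
    have k2 := hpsd.dotProduct_mulVec_nonneg (fun p : Fin d × Fin d => if p.1 = p.2 then (1:ℂ) else 0)
    rw [quad_diag, Complex.zero_le_real] at k2
    refine ⟨?_, ?_, ?_⟩
    · have m1 : 0 ≤ (2*((1-η-β)/(d:ℝ)^2) - 2*(η/(d:ℝ))) * (d:ℝ)^2 := mul_nonneg k1 (by positivity)
      have m1' : (2*((1-η-β)/(d:ℝ)^2) - 2*(η/(d:ℝ))) * (d:ℝ)^2 = 2*(1-η-β) - 2*η*(d:ℝ) := by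
        field_simp
      rw [m1'] at m1
      nlinarith
    · have m2 : 0 ≤ ((d:ℝ) * ((1-η-β)/(d:ℝ)^2 + η/(d:ℝ)) + (d:ℝ)^2 * (β/(d:ℝ))) * (d:ℝ) := mul_nonneg k2 (le_of_lt hDR)
      have m2' : ((d:ℝ) * ((1-η-β)/(d:ℝ)^2 + η/(d:ℝ)) + (d:ℝ)^2 * (β/(d:ℝ))) * (d:ℝ) = (1-η-β) + η*(d:ℝ) + β*(d:ℝ)^2 := by
        field_simp
      rw [m2'] at m2
      nlinarith
    · have m3 : 0 ≤ (2*((1-η-β)/(d:ℝ)^2) + 2*(η/(d:ℝ))) * (d:ℝ)^2 := mul_nonneg k3 (by positivity)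
      have m3' : (2*((1-η-β)/(d:ℝ)^2) + 2*(η/(d:ℝ))) * (d:ℝ)^2 = 2*(1-η-β) + 2*η*(d:ℝ) := by
        field_simp
      rw [m3'] at m3
      nlinarith
  · rintro ⟨h1, h2, h3⟩
    rw [brauer_decomp d hd η β]
    have l1 : 0 ≤ (1 - ((d:ℝ)+1)*η - β) / (d:ℝ)^2 :=
      div_nonneg (by linarith) (by positivity)
    have l2 : 0 ≤ (1 + ((d:ℝ)-1)*η + ((d:ℝ)^2-1)*β) / (d:ℝ)^2 :=
      div_nonneg (by linarith) (by positivity)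
    have l3 : 0 ≤ (1 + ((d:ℝ)-1)*η - β) / (d:ℝ)^2 :=
      div_nonneg (by linarith) (by positivity)
    exact ((psd_smul (projA_psd d) l1).add (psd_smul (projB_psd d hd) l2)).add
      (psd_smul (projC_psd d hd) l3)
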